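/- Assume A(iω) is invertible for every ω ∈ ℝ, and let ω̂ ∈ ℝ with ξ̂ := ‖G(iω̂)‖, where ‖·‖ denotes the operator norm from ℂ^{n_u} to ℂ^{n_y} with Euclidean norms (the largest singular value). Then for every real ξ with ‖D‖ < ξ ≤ ξ̂, the matrix D_ξ := DᵀD − ξ²I is invertible and there exists ω ∈ ℝ such that det H_ξ(iω) = 0; i.e. every level ξ strictly between the largest singular value of D and an attained value of the largest singular value of G(i·) is attained as a singular value at some frequency, and hence H_ξ has a root on the imaginary axis. -/

import Mathlib

open Matrix Complex

noncomputable section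

variable {n nu ny m : ℕ}

/-- `D_ξ = Dᵀ D − ξ² I`. -/
def Dxi (D : Matrix (Fin ny) (Fin nu) ℝ) (ξ : ℝ) : Matrix (Fin nu) (Fin nu) ℝ :=
  Dᵀ * D - ξ ^ 2 • (1 : Matrix (Fin nu) (Fin nu) ℝ)

/-- `(Dᵀ)_ξ = D Dᵀ − ξ² I`, the matrix denoted `D_ξ^{-T}`-inverse base in the paper
(the only dimensionally consistent reading of the `(2,1)` block of `M₀`).
Note that it is invertible iff `D_ξ` is (for `ξ ≠ 0`), since `DᵀD` and `DDᵀ` have the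
same nonzero eigenvalues. -/
def DxiT (D : Matrix (Fin ny) (Fin nu) ℝ) (ξ : ℝ) : Matrix (Fin ny) (Fin ny) ℝ :=
  D * Dᵀ - ξ ^ 2 • (1 : Matrix (Fin ny) (Fin ny) ℝ)

/-- The block matrix `M₀`. -/
def Mzero (A0 : Matrix (Fin n) (Fin n) ℝ) (B : Matrix (Fin n) (Fin nu) ℝ)
    (C : Matrix (Fin ny) (Fin n) ℝ) (D : Matrix (Fin ny) (Fin nu) ℝ) (ξ : ℝ) :
    Matrix (Fin n ⊕ Fin n) (Fin n ⊕ Fin n) ℝ :=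
  fromBlocks (A0 - B * (Dxi D ξ)⁻¹ * Dᵀ * C) (-(B * (Dxi D ξ)⁻¹ * Bᵀ))
    (ξ ^ 2 • (Cᵀ * (DxiT D ξ)⁻¹ * C)) (-A0ᵀ + Cᵀ * D * (Dxi D ξ)⁻¹ * Bᵀ)

/-- The block matrix `Mᵢ` for `1 ≤ i ≤ m`. -/
def Mpos (Ai : Matrix (Fin n) (Fin n) ℝ) : Matrix (Fin n ⊕ Fin n) (Fin n ⊕ Fin n) ℝ :=
  fromBlocks Ai 0 0 0

/-- The block matrix `M₋ᵢ` for `1 ≤ i ≤ m`. -/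
def Mneg (Ai : Matrix (Fin n) (Fin n) ℝ) : Matrix (Fin n ⊕ Fin n) (Fin n ⊕ Fin n) ℝ :=
  fromBlocks 0 0 0 (-Aiᵀ)

/-- `H_ξ(λ) = λI − M₀ − Σᵢ (Mᵢ e^{−λτᵢ} + M₋ᵢ e^{λτᵢ})`. -/
def Hxi (A0 : Matrix (Fin n) (Fin n) ℝ) (A : Fin m → Matrix (Fin n) (Fin n) ℝ)
    (B : Matrix (Fin n) (Fin nu) ℝ) (C : Matrix (Fin ny) (Fin n) ℝ)
    (D : Matrix (Fin ny) (Fin nu) ℝ) (τ : Fin m → ℝ) (ξ : ℝ) (lam : ℂ) :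
    Matrix (Fin n ⊕ Fin n) (Fin n ⊕ Fin n) ℂ :=
  lam • (1 : Matrix (Fin n ⊕ Fin n) (Fin n ⊕ Fin n) ℂ)
    - (Mzero A0 B C D ξ).map Complex.ofReal
    - ∑ i : Fin m, (Complex.exp (-lam * (τ i : ℂ)) • (Mpos (A i)).map Complex.ofReal
        + Complex.exp (lam * (τ i : ℂ)) • (Mneg (A i)).map Complex.ofReal)

/-- `A(λ) = λI − A₀ − Σᵢ Aᵢ e^{−λτᵢ}`. -/
def Amat (A0 : Matrix (Fin n) (Fin n) ℝ) (A : Fin m → Matrix (Fin n) (Fin n) ℝ)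
    (τ : Fin m → ℝ) (lam : ℂ) : Matrix (Fin n) (Fin n) ℂ :=
  lam • (1 : Matrix (Fin n) (Fin n) ℂ) - A0.map Complex.ofReal
    - ∑ i : Fin m, Complex.exp (-lam * (τ i : ℂ)) • (A i).map Complex.ofReal

/-- The transfer function `G(λ) = C A(λ)⁻¹ B + D`. -/
def Gmat (A0 : Matrix (Fin n) (Fin n) ℝ) (A : Fin m → Matrix (Fin n) (Fin n) ℝ)
    (B : Matrix (Fin n) (Fin nu) ℝ) (C : Matrix (Fin ny) (Fin n) ℝ)
    (D : Matrix (Fin ny) (Fin nu) ℝ) (τ : Fin m → ℝ) (lam : ℂ) :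
    Matrix (Fin ny) (Fin nu) ℂ :=
  C.map Complex.ofReal * (Amat A0 A τ lam)⁻¹ * B.map Complex.ofReal + D.map Complex.ofReal

/-- `τ_max`, the maximum of the delays. -/
def tauMax [NeZero m] (τ : Fin m → ℝ) : ℝ :=
  Finset.univ.sup' Finset.univ_nonempty τ

/-- `λ` is an eigenvalue of the infinite-dimensional operator `L_ξ`: there is a continuously
differentiable, not identically zero function `u : [−τ_max, τ_max] → ℂ^{2n}` with
`u′(t) = λ u(t)` on the interval and `u′(0) = M₀ u(0) + Σᵢ (Mᵢ u(−τᵢ) + M₋ᵢ u(τᵢ))`. -/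
def IsEigLxi [NeZero m] (A0 : Matrix (Fin n) (Fin n) ℝ) (A : Fin m → Matrix (Fin n) (Fin n) ℝ)
    (B : Matrix (Fin n) (Fin nu) ℝ) (C : Matrix (Fin ny) (Fin n) ℝ)
    (D : Matrix (Fin ny) (Fin nu) ℝ) (τ : Fin m → ℝ) (ξ : ℝ) (lam : ℂ) : Prop :=
  ∃ u : ℝ → (Fin n ⊕ Fin n → ℂ),
    (∀ t ∈ Set.Icc (-(tauMax τ)) (tauMax τ),
      HasDerivWithinAt u (lam • u t) (Set.Icc (-(tauMax τ)) (tauMax τ)) t) ∧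
    (∃ t ∈ Set.Icc (-(tauMax τ)) (tauMax τ), u t ≠ 0) ∧
    lam • u 0 = (Mzero A0 B C D ξ).map Complex.ofReal *ᵥ u 0
      + ∑ i : Fin m, ((Mpos (A i)).map Complex.ofReal *ᵥ u (-(τ i))
          + (Mneg (A i)).map Complex.ofReal *ᵥ u (τ i))


/-- The operator norm of a complex matrix, viewed as a linear map between Euclidean spaces
(i.e. its largest singular value). -/
def l2OpNorm {a b : ℕ} (M : Matrix (Fin a) (Fin b) ℂ) : ℝ :=
  ‖LinearMap.toContinuousLinearMap (Matrix.toEuclideanLin M)‖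

namespace Aux

def clm {a b : ℕ} (M : Matrix (Fin a) (Fin b) ℂ) :
    EuclideanSpace ℂ (Fin b) →L[ℂ] EuclideanSpace ℂ (Fin a) :=
  LinearMap.toContinuousLinearMap (Matrix.toEuclideanLin M)

lemma l2OpNorm_eq {a b : ℕ} (M : Matrix (Fin a) (Fin b) ℂ) : l2OpNorm M = ‖clm M‖ := rfl

lemma clm_apply {a b : ℕ} (M : Matrix (Fin a) (Fin b) ℂ) (x : EuclideanSpace ℂ (Fin b)) :
    clm M x = (WithLp.equiv 2 (Fin a → ℂ)).symm (M *ᵥ (WithLp.equiv 2 (Fin b → ℂ) x)) := by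
  simp [clm, Matrix.toEuclideanLin_apply]

lemma clm_mul {a b c : ℕ} (M : Matrix (Fin a) (Fin b) ℂ) (N : Matrix (Fin b) (Fin c) ℂ) :
    clm (M * N) = (clm M).comp (clm N) := by
  ext x
  simp [clm_apply, Matrix.mulVec_mulVec]

lemma clm_add {a b : ℕ} (M N : Matrix (Fin a) (Fin b) ℂ) : clm (M + N) = clm M + clm N := by
  ext x; simp [clm_apply, Matrix.add_mulVec]

lemma l2OpNorm_nonneg {a b : ℕ} (M : Matrix (Fin a) (Fin b) ℂ) : 0 ≤ l2OpNorm M :=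
  norm_nonneg _

lemma l2OpNorm_mul_le {a b c : ℕ} (M : Matrix (Fin a) (Fin b) ℂ) (N : Matrix (Fin b) (Fin c) ℂ) :
    l2OpNorm (M * N) ≤ l2OpNorm M * l2OpNorm N := by
  rw [l2OpNorm_eq, clm_mul]; exact ContinuousLinearMap.opNorm_comp_le _ _

lemma l2OpNorm_add_le {a b : ℕ} (M N : Matrix (Fin a) (Fin b) ℂ) :
    l2OpNorm (M + N) ≤ l2OpNorm M + l2OpNorm N := by
  rw [l2OpNorm_eq, clm_add]; exact norm_add_le _ _

lemma l2OpNorm_conjTranspose {a b : ℕ} (M : Matrix (Fin a) (Fin b) ℂ) :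
    l2OpNorm Mᴴ = l2OpNorm M := by
  open scoped Matrix.Norms.L2Operator in
  exact Matrix.l2_opNorm_conjTranspose M

lemma norm_mulVec_le {a b : ℕ} (M : Matrix (Fin a) (Fin b) ℂ) (x : EuclideanSpace ℂ (Fin b)) :
    ‖(WithLp.equiv 2 (Fin a → ℂ)).symm (M *ᵥ (WithLp.equiv 2 (Fin b → ℂ) x))‖
      ≤ l2OpNorm M * ‖x‖ := by
  rw [← clm_apply, l2OpNorm_eq]; exact (clm M).le_opNorm x

lemma l2OpNorm_le_bound {a b : ℕ} (M : Matrix (Fin a) (Fin b) ℂ) {c : ℝ} (hc : 0 ≤ c)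
    (h : ∀ x : EuclideanSpace ℂ (Fin b),
      ‖(WithLp.equiv 2 (Fin a → ℂ)).symm (M *ᵥ (WithLp.equiv 2 (Fin b → ℂ) x))‖ ≤ c * ‖x‖) :
    l2OpNorm M ≤ c := by
  rw [l2OpNorm_eq]
  exact ContinuousLinearMap.opNorm_le_bound _ hc (by simpa [clm_apply] using h)


lemma isUnit_sub_smul_one {a b : ℕ} (M : Matrix (Fin a) (Fin b) ℂ) {ξ : ℝ}
    (h : l2OpNorm M < ξ) :
    IsUnit (Mᴴ * M - (ξ : ℂ) ^ 2 • (1 : Matrix (Fin b) (Fin b) ℂ)) := by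
  have hM0 : 0 ≤ l2OpNorm M := l2OpNorm_nonneg M
  have hξ0 : 0 < ξ := lt_of_le_of_lt hM0 h
  rw [Matrix.isUnit_iff_isUnit_det, isUnit_iff_ne_zero]
  intro hdet
  obtain ⟨v, hv, hv0⟩ := (Matrix.exists_mulVec_eq_zero_iff.2 hdet)
  have heig : (Mᴴ * M) *ᵥ v = ((ξ : ℂ) ^ 2) • v := by
    rw [Matrix.sub_mulVec, sub_eq_zero, Matrix.smul_mulVec, Matrix.one_mulVec] at hv0
    exact hv0
  set x : EuclideanSpace ℂ (Fin b) := (WithLp.equiv 2 (Fin b → ℂ)).symm v with hx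
  have hxn : 0 < ‖x‖ := by
    rw [norm_pos_iff]
    simpa [hx] using hv
  have hb2 : ‖(WithLp.equiv 2 (Fin b → ℂ)).symm ((Mᴴ * M) *ᵥ v)‖ ≤ l2OpNorm (Mᴴ * M) * ‖x‖ :=
    norm_mulVec_le _ x
  have hMM : l2OpNorm (Mᴴ * M) ≤ l2OpNorm M * l2OpNorm M :=
    le_trans (l2OpNorm_mul_le _ _) (by rw [l2OpNorm_conjTranspose])
  have hval : ‖(WithLp.equiv 2 (Fin b → ℂ)).symm ((Mᴴ * M) *ᵥ v)‖ = ξ ^ 2 * ‖x‖ := by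
    rw [heig]
    have h1 : (WithLp.equiv 2 (Fin b → ℂ)).symm (((ξ : ℂ) ^ 2) • v) = ((ξ : ℂ) ^ 2) • x := rfl
    rw [h1, norm_smul]
    simp [abs_of_pos hξ0]
  rw [hval] at hb2
  have h1 : ξ ^ 2 ≤ l2OpNorm M * l2OpNorm M :=
    le_of_mul_le_mul_right (hb2.trans (mul_le_mul_of_nonneg_right hMM hxn.le)) hxn
  nlinarith [h1]

lemma map_transpose {a b : ℕ} (M : Matrix (Fin a) (Fin b) ℝ) :
    (Mᵀ).map Complex.ofReal = (M.map Complex.ofReal)ᴴ := by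
  ext i j
  simp [Matrix.map_apply, Matrix.conjTranspose_apply, Complex.conj_ofReal]

lemma map_Dxi {ny nu : ℕ} (D : Matrix (Fin ny) (Fin nu) ℝ) (ξ : ℝ) :
    (Dxi D ξ).map Complex.ofReal
      = (D.map Complex.ofReal)ᴴ * (D.map Complex.ofReal)
        - (ξ : ℂ) ^ 2 • (1 : Matrix (Fin nu) (Fin nu) ℂ) := by
  ext i j
  simp [Dxi, Matrix.map_apply, Matrix.mul_apply, Matrix.conjTranspose_apply,
    Matrix.one_apply, Matrix.sub_apply, Matrix.smul_apply, Complex.conj_ofReal,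
    apply_ite (Complex.ofReal)]

lemma map_DxiT {ny nu : ℕ} (D : Matrix (Fin ny) (Fin nu) ℝ) (ξ : ℝ) :
    (DxiT D ξ).map Complex.ofReal
      = ((D.map Complex.ofReal)ᴴ)ᴴ * (D.map Complex.ofReal)ᴴ
        - (ξ : ℂ) ^ 2 • (1 : Matrix (Fin ny) (Fin ny) ℂ) := by
  ext i j
  simp [DxiT, Matrix.map_apply, Matrix.mul_apply, Matrix.conjTranspose_apply,
    Matrix.one_apply, Matrix.sub_apply, Matrix.smul_apply, Complex.conj_ofReal,
    apply_ite (Complex.ofReal)]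

lemma isUnit_of_map {k : ℕ} (M : Matrix (Fin k) (Fin k) ℝ)
    (h : IsUnit (M.map Complex.ofReal)) : IsUnit M := by
  rw [Matrix.isUnit_iff_isUnit_det, isUnit_iff_ne_zero] at h ⊢
  intro h0
  apply h
  have : M.map Complex.ofReal = Complex.ofRealHom.mapMatrix M := rfl
  rw [this, ← RingHom.map_det, h0]
  simp

lemma isUnit_Dxi {ny nu : ℕ} {D : Matrix (Fin ny) (Fin nu) ℝ} {ξ : ℝ}
    (h : l2OpNorm (D.map Complex.ofReal) < ξ) :
    IsUnit ((Dxi D ξ).map Complex.ofReal) ∧ IsUnit (Dxi D ξ) := by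
  have h1 : IsUnit ((Dxi D ξ).map Complex.ofReal) := by
    rw [map_Dxi]; exact isUnit_sub_smul_one _ h
  exact ⟨h1, isUnit_of_map _ h1⟩

lemma isUnit_DxiT {ny nu : ℕ} {D : Matrix (Fin ny) (Fin nu) ℝ} {ξ : ℝ}
    (h : l2OpNorm (D.map Complex.ofReal) < ξ) :
    IsUnit ((DxiT D ξ).map Complex.ofReal) ∧ IsUnit (DxiT D ξ) := by
  have h' : l2OpNorm ((D.map Complex.ofReal)ᴴ) < ξ := by rwa [l2OpNorm_conjTranspose]
  have h1 : IsUnit ((DxiT D ξ).map Complex.ofReal) := by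
    rw [map_DxiT]; exact isUnit_sub_smul_one _ h'
  exact ⟨h1, isUnit_of_map _ h1⟩


lemma clm_conjTranspose_inner_left {a b : ℕ} (M : Matrix (Fin a) (Fin b) ℂ)
    (z : EuclideanSpace ℂ (Fin a)) (y : EuclideanSpace ℂ (Fin b)) :
    inner ℂ (clm Mᴴ z) y = (inner ℂ z (clm M y) : ℂ) := by
  have h : Matrix.toEuclideanLin Mᴴ = LinearMap.adjoint (Matrix.toEuclideanLin M) :=
    Matrix.toEuclideanLin_conjTranspose_eq_adjoint M
  have h1 : clm Mᴴ z = LinearMap.adjoint (Matrix.toEuclideanLin M) z := by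
    simp [clm, h]
  rw [h1, LinearMap.adjoint_inner_left]
  rfl

lemma exists_eigenvector {a b : ℕ} [NeZero b] (M : Matrix (Fin a) (Fin b) ℂ) :
    ∃ u : Fin b → ℂ, u ≠ 0 ∧
      (Mᴴ * M) *ᵥ u = (((l2OpNorm M : ℝ) : ℂ) ^ 2) • u := by
  haveI : Nonempty (Fin b) := ⟨⟨0, Nat.pos_of_ne_zero (NeZero.ne b)⟩⟩
  haveI : Nontrivial (EuclideanSpace ℂ (Fin b)) := by
    refine ⟨(WithLp.equiv 2 (Fin b → ℂ)).symm (fun _ => 1), 0, ?_⟩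
    intro hcon
    have := congrFun (congrArg (WithLp.equiv 2 (Fin b → ℂ)) hcon) (Classical.arbitrary _)
    simpa using this
  have hsne : (Metric.sphere (0 : EuclideanSpace ℂ (Fin b)) 1).Nonempty :=
    NormedSpace.sphere_nonempty.mpr zero_le_one
  obtain ⟨x₀, hx₀s, hmax⟩ := (isCompact_sphere (0 : EuclideanSpace ℂ (Fin b)) 1).exists_isMaxOn
    hsne ((clm M).continuous.norm.continuousOn)
  have hx₀n : ‖x₀‖ = 1 := mem_sphere_zero_iff_norm.1 hx₀s
  have hx₀ : x₀ ≠ 0 := by intro h0; rw [h0] at hx₀n; simp at hx₀n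
  -- the norm is attained at x₀
  have hattain : ‖clm M x₀‖ = l2OpNorm M := by
    refine le_antisymm (by simpa [hx₀n, l2OpNorm_eq] using (clm M).le_opNorm x₀) ?_
    rw [l2OpNorm_eq]
    refine ContinuousLinearMap.opNorm_le_bound _ (norm_nonneg _) (fun x => ?_)
    rcases eq_or_ne x 0 with rfl | hx
    · simp
    · have hnx : 0 < ‖x‖ := norm_pos_iff.2 hx
      have hmem : (‖x‖⁻¹ • x) ∈ Metric.sphere (0 : EuclideanSpace ℂ (Fin b)) 1 := by
        simp [norm_smul, abs_of_pos (inv_pos.2 hnx), inv_mul_cancel₀ hnx.ne']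
      have h3 : ‖x‖⁻¹ * ‖clm M x‖ ≤ ‖clm M x₀‖ := by
        have := hmax hmem
        simpa [Set.mem_setOf_eq, _root_.map_smul, norm_smul, Real.norm_eq_abs, abs_inv,
          abs_norm] using this
      calc ‖clm M x‖ = ‖x‖ * (‖x‖⁻¹ * ‖clm M x‖) := by field_simp
        _ ≤ ‖x‖ * ‖clm M x₀‖ := mul_le_mul_of_nonneg_left h3 hnx.le
        _ = ‖clm M x₀‖ * ‖x‖ := mul_comm _ _
  -- self-adjointness of T = clm (Mᴴ M)
  set T : EuclideanSpace ℂ (Fin b) →L[ℂ] EuclideanSpace ℂ (Fin b) := clm (Mᴴ * M) with hT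
  have hTapp : ∀ x, T x = clm Mᴴ (clm M x) := by
    intro x; rw [hT, clm_mul]; rfl
  have hTsa : IsSelfAdjoint T := by
    rw [ContinuousLinearMap.isSelfAdjoint_iff_isSymmetric]
    intro x y
    show (inner ℂ (T x) y : ℂ) = inner ℂ x (T y)
    rw [hTapp, hTapp, clm_conjTranspose_inner_left]
    rw [← inner_conj_symm x, clm_conjTranspose_inner_left, inner_conj_symm]
  have hre : ∀ x, T.reApplyInnerSelf x = ‖clm M x‖ ^ 2 := by
    intro x
    rw [ContinuousLinearMap.reApplyInnerSelf_apply, hTapp, clm_conjTranspose_inner_left]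
    exact inner_self_eq_norm_sq (𝕜 := ℂ) (clm M x)
  have hext : IsMaxOn T.reApplyInnerSelf (Metric.sphere (0 : EuclideanSpace ℂ (Fin b)) ‖x₀‖) x₀ := by
    rw [hx₀n]
    intro x hx
    simp only [Set.mem_setOf_eq, hre]
    have := hmax hx
    simp only [Set.mem_setOf_eq] at this
    exact pow_le_pow_left₀ (norm_nonneg _) this 2
  have heig := hTsa.eq_smul_self_of_isLocalExtrOn (Or.inr hext.localize)
  have hrq : T.rayleighQuotient x₀ = (l2OpNorm M) ^ 2 := by
    rw [ContinuousLinearMap.rayleighQuotient, hre, hx₀n, hattain]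
    simp
  rw [hrq] at heig; push_cast at heig
  refine ⟨WithLp.equiv 2 (Fin b → ℂ) x₀, ?_, ?_⟩
  · intro h0
    apply hx₀
    have : x₀ = (WithLp.equiv 2 (Fin b → ℂ)).symm (WithLp.equiv 2 (Fin b → ℂ) x₀) := rfl
    rw [this, h0]
    rfl
  · have h1 : clm (Mᴴ * M) x₀
        = (WithLp.equiv 2 (Fin b → ℂ)).symm ((Mᴴ * M) *ᵥ (WithLp.equiv 2 (Fin b → ℂ) x₀)) :=
      clm_apply _ _
    rw [← hT, heig] at h1
    have h2 := congrArg (WithLp.equiv 2 (Fin b → ℂ)) h1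
    simp only [Equiv.apply_symm_apply] at h2
    rw [← h2]
    rfl

lemma clm_eq_clmL {a b : ℕ} (M : Matrix (Fin a) (Fin b) ℂ) :
    clm M = (Matrix.toEuclideanLin.trans LinearMap.toContinuousLinearMap) M := rfl

lemma clm_one {a : ℕ} (x : EuclideanSpace ℂ (Fin a)) :
    clm (1 : Matrix (Fin a) (Fin a) ℂ) x = x := by
  rw [clm_apply]
  simp

lemma continuous_l2OpNorm {a b : ℕ} :
    Continuous (fun M : Matrix (Fin a) (Fin b) ℂ => l2OpNorm M) := by
  have h : Continuous (fun M : Matrix (Fin a) (Fin b) ℂ =>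
      (Matrix.toEuclideanLin.trans LinearMap.toContinuousLinearMap
        : Matrix (Fin a) (Fin b) ℂ ≃ₗ[ℂ] _) M) :=
    LinearMap.continuous_of_finiteDimensional _
  exact continuous_norm.comp h

section Sys

variable {n nu ny m : ℕ} (A0 : Matrix (Fin n) (Fin n) ℝ) (A : Fin m → Matrix (Fin n) (Fin n) ℝ)
  (B : Matrix (Fin n) (Fin nu) ℝ) (C : Matrix (Fin ny) (Fin n) ℝ)
  (D : Matrix (Fin ny) (Fin nu) ℝ) (τ : Fin m → ℝ)

lemma continuous_afun : Continuous (fun ω : ℝ => Amat A0 A τ (Complex.I * ω)) := by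
  unfold Amat
  refine Continuous.sub (Continuous.sub ?_ continuous_const) ?_
  · exact ((continuous_const.mul Complex.continuous_ofReal).smul continuous_const)
  · refine continuous_finset_sum _ (fun i _ => ?_)
    exact ((Complex.continuous_exp.comp
      (((continuous_const.mul Complex.continuous_ofReal).neg).mul
        continuous_const)).smul continuous_const)

lemma continuous_gfun (hA : ∀ ω : ℝ, IsUnit (Amat A0 A τ (Complex.I * ω))) :
    Continuous (fun ω : ℝ => l2OpNorm (Gmat A0 A B C D τ (Complex.I * ω))) := by
  have ha := continuous_afun A0 A τ
  have hdet : Continuous fun ω : ℝ => (Amat A0 A τ (Complex.I * ω)).det := ha.matrix_det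
  have hne : ∀ ω : ℝ, (Amat A0 A τ (Complex.I * ω)).det ≠ 0 := fun ω =>
    isUnit_iff_ne_zero.1 ((Matrix.isUnit_iff_isUnit_det _).1 (hA ω))
  have hinv : Continuous fun ω : ℝ => (Amat A0 A τ (Complex.I * ω))⁻¹ := by
    simp only [Matrix.inv_def, Ring.inverse_eq_inv']
    exact ((hdet.inv₀ hne).smul ha.matrix_adjugate)
  have hg : Continuous (fun ω : ℝ => Gmat A0 A B C D τ (Complex.I * ω)) := by
    unfold Gmat
    exact ((continuous_const.matrix_mul hinv).matrix_mul continuous_const).add continuous_const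
  exact continuous_l2OpNorm.comp hg

/-- The constant `K` controlling the size of the non-`λ` part of `A(λ)`. -/
def Kc : ℝ := l2OpNorm (A0.map Complex.ofReal)
  + ∑ i : Fin m, l2OpNorm ((A i).map Complex.ofReal)

lemma clm_afun_apply (lam : ℂ) (x : EuclideanSpace ℂ (Fin n)) :
    clm (Amat A0 A τ lam) x
      = lam • x - (clm (A0.map Complex.ofReal) x
          + ∑ i : Fin m, Complex.exp (-lam * (τ i : ℂ)) • clm ((A i).map Complex.ofReal) x) := by
  unfold Amat
  rw [clm_eq_clmL, map_sub, map_sub, _root_.map_smul, map_sum]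
  simp only [_root_.map_smul, ContinuousLinearMap.sub_apply, ContinuousLinearMap.smul_apply,
    ContinuousLinearMap.sum_apply, ← clm_eq_clmL, clm_one, sub_sub,
    ContinuousLinearMap.add_apply]

lemma norm_clm_afun_lower (ω : ℝ) (x : EuclideanSpace ℂ (Fin n)) :
    (|ω| - Kc A0 A) * ‖x‖ ≤ ‖clm (Amat A0 A τ (Complex.I * ω)) x‖ := by
  have hexp := clm_afun_apply A0 A τ (Complex.I * ω) x
  set s : EuclideanSpace ℂ (Fin n) := clm (A0.map Complex.ofReal) x
      + ∑ i : Fin m, Complex.exp (-(Complex.I * (ω : ℂ)) * (τ i : ℂ))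
          • clm ((A i).map Complex.ofReal) x with hs
  rw [hexp]
  have h1 : ‖(Complex.I * (ω : ℂ)) • x‖ = |ω| * ‖x‖ := by
    rw [norm_smul]
    simp
  have h2 : ‖s‖ ≤ Kc A0 A * ‖x‖ := by
    rw [hs]
    refine le_trans (norm_add_le _ _) ?_
    rw [Kc, add_mul, Finset.sum_mul]
    simp only [l2OpNorm_eq]
    refine add_le_add ((clm (A0.map Complex.ofReal)).le_opNorm x) ?_
    refine le_trans (norm_sum_le _ _) (Finset.sum_le_sum (fun i _ => ?_))
    rw [norm_smul]
    have he : ‖Complex.exp (-(Complex.I * (ω : ℂ)) * (τ i : ℂ))‖ = 1 := by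
      rw [Complex.norm_exp]
      simp
    rw [he, one_mul]
    exact (clm ((A i).map Complex.ofReal)).le_opNorm x

  have h3 : ‖(Complex.I * (ω : ℂ)) • x‖ - ‖s‖ ≤ ‖(Complex.I * (ω : ℂ)) • x - s‖ :=
    norm_sub_norm_le _ _
  have h4 : (|ω| - Kc A0 A) * ‖x‖ = |ω| * ‖x‖ - Kc A0 A * ‖x‖ := by ring
  rw [h4]
  linarith

lemma l2OpNorm_afun_inv_le {ω : ℝ} (hA : IsUnit (Amat A0 A τ (Complex.I * ω)))
    (hω : Kc A0 A < |ω|) :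
    l2OpNorm ((Amat A0 A τ (Complex.I * ω))⁻¹) ≤ (|ω| - Kc A0 A)⁻¹ := by
  have hpos : (0 : ℝ) < |ω| - Kc A0 A := sub_pos.2 hω
  rw [l2OpNorm_eq]
  refine ContinuousLinearMap.opNorm_le_bound _ (inv_nonneg.2 hpos.le) (fun y => ?_)
  set x := clm ((Amat A0 A τ (Complex.I * ω))⁻¹) y with hx
  have hxy : clm (Amat A0 A τ (Complex.I * ω)) x = y := by
    rw [hx, ← ContinuousLinearMap.comp_apply, ← clm_mul,
      Matrix.mul_nonsing_inv _ ((Matrix.isUnit_iff_isUnit_det _).1 hA)]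
    exact clm_one y
  have hlow := norm_clm_afun_lower A0 A τ ω x
  rw [hxy] at hlow
  have h2 : ‖x‖ = (|ω| - Kc A0 A)⁻¹ * ((|ω| - Kc A0 A) * ‖x‖) := by field_simp
  rw [h2]
  exact mul_le_mul_of_nonneg_left hlow (inv_nonneg.2 hpos.le)

lemma exists_gfun_lt {ξ : ℝ} (hA : ∀ ω : ℝ, IsUnit (Amat A0 A τ (Complex.I * ω)))
    (hD : l2OpNorm (D.map Complex.ofReal) < ξ) :
    ∃ ω₀ : ℝ, l2OpNorm (Gmat A0 A B C D τ (Complex.I * ω₀)) < ξ := by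
  set cb := l2OpNorm (C.map Complex.ofReal) * l2OpNorm (B.map Complex.ofReal) with hcb
  have hcb0 : 0 ≤ cb := mul_nonneg (l2OpNorm_nonneg _) (l2OpNorm_nonneg _)
  set d := l2OpNorm (D.map Complex.ofReal) with hd
  have hξd : 0 < ξ - d := sub_pos.2 hD
  have hK0 : 0 ≤ Kc A0 A := by
    rw [Kc]
    exact add_nonneg (l2OpNorm_nonneg _)
      (Finset.sum_nonneg (fun i _ => l2OpNorm_nonneg _))
  set ω₀ := Kc A0 A + (cb + 1) / (ξ - d) with hω₀
  have hden : (0 : ℝ) < (cb + 1) / (ξ - d) := div_pos (by linarith) hξd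
  have hω₀pos : 0 < ω₀ := by positivity
  have habs : |ω₀| = ω₀ := abs_of_pos hω₀pos
  have hωK : Kc A0 A < |ω₀| := by rw [habs, hω₀]; linarith
  refine ⟨ω₀, ?_⟩
  have hinv : l2OpNorm ((Amat A0 A τ (Complex.I * ω₀))⁻¹) ≤ (|ω₀| - Kc A0 A)⁻¹ :=
    l2OpNorm_afun_inv_le A0 A τ (hA ω₀) hωK
  have hsub : |ω₀| - Kc A0 A = (cb + 1) / (ξ - d) := by rw [habs, hω₀]; ring
  have hG : l2OpNorm (Gmat A0 A B C D τ (Complex.I * ω₀))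
      ≤ l2OpNorm (C.map Complex.ofReal) * l2OpNorm ((Amat A0 A τ (Complex.I * ω₀))⁻¹)
        * l2OpNorm (B.map Complex.ofReal) + d := by
    unfold Gmat
    refine le_trans (l2OpNorm_add_le _ _) (add_le_add ?_ le_rfl)
    refine le_trans (l2OpNorm_mul_le _ _) ?_
    exact mul_le_mul_of_nonneg_right (l2OpNorm_mul_le _ _) (l2OpNorm_nonneg _)
  have hb : l2OpNorm (C.map Complex.ofReal) * l2OpNorm ((Amat A0 A τ (Complex.I * ω₀))⁻¹)
      * l2OpNorm (B.map Complex.ofReal) ≤ cb * ((cb + 1) / (ξ - d))⁻¹ := by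
    rw [hsub] at hinv
    calc l2OpNorm (C.map Complex.ofReal) * l2OpNorm ((Amat A0 A τ (Complex.I * ω₀))⁻¹)
        * l2OpNorm (B.map Complex.ofReal)
        ≤ l2OpNorm (C.map Complex.ofReal) * ((cb + 1) / (ξ - d))⁻¹
          * l2OpNorm (B.map Complex.ofReal) := by
          refine mul_le_mul_of_nonneg_right
            (mul_le_mul_of_nonneg_left hinv (l2OpNorm_nonneg _)) (l2OpNorm_nonneg _)
      _ = cb * ((cb + 1) / (ξ - d))⁻¹ := by rw [hcb]; ring
  have hfinal : cb * ((cb + 1) / (ξ - d))⁻¹ < ξ - d := by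
    rw [inv_div, ← mul_div_assoc, div_lt_iff₀ (by linarith : (0:ℝ) < cb + 1)]
    nlinarith
  calc l2OpNorm (Gmat A0 A B C D τ (Complex.I * ω₀)) ≤ _ + d := hG
    _ ≤ cb * ((cb + 1) / (ξ - d))⁻¹ + d := add_le_add hb le_rfl
    _ < (ξ - d) + d := add_lt_add_of_lt_of_le hfinal le_rfl
    _ = ξ := by ring

end Sys

section Blocks

lemma map_mul' {a b c : ℕ} (M : Matrix (Fin a) (Fin b) ℝ) (N : Matrix (Fin b) (Fin c) ℝ) :
    (M * N).map Complex.ofReal = M.map Complex.ofReal * N.map Complex.ofReal := by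
  ext i j
  simp [Matrix.map_apply, Matrix.mul_apply]

lemma map_sub' {a b : ℕ} (M N : Matrix (Fin a) (Fin b) ℝ) :
    (M - N).map Complex.ofReal = M.map Complex.ofReal - N.map Complex.ofReal := by
  ext i j
  simp [Matrix.map_apply]

lemma map_add' {a b : ℕ} (M N : Matrix (Fin a) (Fin b) ℝ) :
    (M + N).map Complex.ofReal = M.map Complex.ofReal + N.map Complex.ofReal := by
  ext i j
  simp [Matrix.map_apply]

lemma map_neg' {a b : ℕ} (M : Matrix (Fin a) (Fin b) ℝ) :
    (-M).map Complex.ofReal = -(M.map Complex.ofReal) := by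
  ext i j
  simp [Matrix.map_apply]

lemma map_one' {a : ℕ} :
    (1 : Matrix (Fin a) (Fin a) ℝ).map Complex.ofReal = 1 := by
  ext i j
  simp [Matrix.map_apply, Matrix.one_apply, apply_ite (Complex.ofReal)]

lemma fromBlocks_sub {l mm nn o : ℕ} (A A' : Matrix (Fin l) (Fin nn) ℂ)
    (B B' : Matrix (Fin l) (Fin o) ℂ) (C C' : Matrix (Fin mm) (Fin nn) ℂ)
    (D D' : Matrix (Fin mm) (Fin o) ℂ) :
    fromBlocks A B C D - fromBlocks A' B' C' D'
      = fromBlocks (A - A') (B - B') (C - C') (D - D') := by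
  rw [sub_eq_add_neg, Matrix.fromBlocks_neg, Matrix.fromBlocks_add]
  simp [sub_eq_add_neg]

lemma fromBlocks_sum {ι : Type*} (s : Finset ι) {l mm nn o : ℕ}
    (f₁ : ι → Matrix (Fin l) (Fin nn) ℂ) (f₂ : ι → Matrix (Fin l) (Fin o) ℂ)
    (f₃ : ι → Matrix (Fin mm) (Fin nn) ℂ) (f₄ : ι → Matrix (Fin mm) (Fin o) ℂ) :
    ∑ i ∈ s, fromBlocks (f₁ i) (f₂ i) (f₃ i) (f₄ i)
      = fromBlocks (∑ i ∈ s, f₁ i) (∑ i ∈ s, f₂ i) (∑ i ∈ s, f₃ i) (∑ i ∈ s, f₄ i) := by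
  induction s using Finset.cons_induction with
  | empty => simp [← Matrix.fromBlocks_zero]
  | cons a s ha ih => simp [Finset.sum_cons, ih, Matrix.fromBlocks_add]

section HxiEq

variable {n nu ny m : ℕ} (A0 : Matrix (Fin n) (Fin n) ℝ) (A : Fin m → Matrix (Fin n) (Fin n) ℝ)
  (B : Matrix (Fin n) (Fin nu) ℝ) (C : Matrix (Fin ny) (Fin n) ℝ)
  (D : Matrix (Fin ny) (Fin nu) ℝ) (τ : Fin m → ℝ) (ξ : ℝ)

lemma Hxi_eq (lam : ℂ) :
    Hxi A0 A B C D τ ξ lam = fromBlocks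
      (Amat A0 A τ lam + (B.map Complex.ofReal) * ((Dxi D ξ)⁻¹).map Complex.ofReal
        * (D.map Complex.ofReal)ᴴ * (C.map Complex.ofReal))
      ((B.map Complex.ofReal) * ((Dxi D ξ)⁻¹).map Complex.ofReal * (B.map Complex.ofReal)ᴴ)
      (-((ξ : ℂ) ^ 2 • ((C.map Complex.ofReal)ᴴ * ((DxiT D ξ)⁻¹).map Complex.ofReal
        * (C.map Complex.ofReal))))
      (lam • 1 + (A0.map Complex.ofReal)ᴴ
        - (C.map Complex.ofReal)ᴴ * (D.map Complex.ofReal)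
          * ((Dxi D ξ)⁻¹).map Complex.ofReal * (B.map Complex.ofReal)ᴴ
        + ∑ i : Fin m, Complex.exp (lam * (τ i : ℂ)) • ((A i).map Complex.ofReal)ᴴ) := by
  unfold Hxi Mzero Mpos Mneg
  rw [← Matrix.fromBlocks_one, Matrix.fromBlocks_smul, Matrix.fromBlocks_map]
  have hsum : ∀ i : Fin m,
      Complex.exp (-lam * (τ i : ℂ)) • ((fromBlocks (A i) 0 0 0 :
          Matrix (Fin n ⊕ Fin n) (Fin n ⊕ Fin n) ℝ).map Complex.ofReal)
        + Complex.exp (lam * (τ i : ℂ)) • ((fromBlocks 0 0 0 (-(A i)ᵀ) :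
          Matrix (Fin n ⊕ Fin n) (Fin n ⊕ Fin n) ℝ).map Complex.ofReal)
      = fromBlocks (Complex.exp (-lam * (τ i : ℂ)) • (A i).map Complex.ofReal) 0 0
          (Complex.exp (lam * (τ i : ℂ)) • (-(A i)ᵀ).map Complex.ofReal) := by
    intro i
    rw [Matrix.fromBlocks_map, Matrix.fromBlocks_map, Matrix.fromBlocks_smul,
      Matrix.fromBlocks_smul, Matrix.fromBlocks_add]
    congr 1 <;> simp
  rw [Finset.sum_congr rfl (fun i _ => hsum i), fromBlocks_sum, fromBlocks_sub, fromBlocks_sub]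
  rw [Matrix.fromBlocks_inj]
  have hsm : ((ξ ^ 2 • (Cᵀ * (DxiT D ξ)⁻¹ * C) : Matrix (Fin n) (Fin n) ℝ)).map Complex.ofReal
      = (ξ : ℂ) ^ 2 • ((Cᵀ * (DxiT D ξ)⁻¹ * C).map Complex.ofReal) := by
    ext i j
    simp [Matrix.map_apply]
  refine ⟨?_, ?_, ?_, ?_⟩
  · unfold Amat
    rw [map_sub', map_mul', map_mul', map_mul', map_transpose]
    abel
  · rw [map_neg', map_mul', map_mul', map_transpose]
    simp only [smul_zero, Finset.sum_const_zero, zero_sub, sub_neg_eq_add, zero_add, sub_zero]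
  · rw [hsm, map_mul', map_mul', map_transpose]
    simp only [smul_zero, Finset.sum_const_zero, zero_sub, sub_zero]
  · rw [map_add', map_neg', map_mul', map_mul', map_mul',
      map_transpose, map_transpose]
    simp only [map_neg', map_transpose, smul_neg, Finset.sum_neg_distrib]
    abel

end HxiEq
end Blocks

section Rows

variable {n nu ny : ℕ} (Ac : Matrix (Fin n) (Fin n) ℂ) (Bc : Matrix (Fin n) (Fin nu) ℂ)
  (Cc : Matrix (Fin ny) (Fin n) ℂ) (Dc : Matrix (Fin ny) (Fin nu) ℂ)
  (E : Matrix (Fin nu) (Fin nu) ℂ) (F : Matrix (Fin ny) (Fin ny) ℂ) (c : ℂ)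
  (u : Fin nu → ℂ) (v : Fin ny → ℂ) (x y : Fin n → ℂ)

lemma row1_abstract (hE : E * (Dcᴴ * Dc - c • 1) = 1)
    (h1 : Ac *ᵥ x = Bc *ᵥ u) (h2 : Cc *ᵥ x = v - Dc *ᵥ u)
    (h4 : Bcᴴ *ᵥ y = c • u - Dcᴴ *ᵥ v) :
    (Ac + Bc * E * Dcᴴ * Cc) *ᵥ x + (Bc * E * Bcᴴ) *ᵥ y = 0 := by
  have e : (Dcᴴ * Dc - c • (1 : Matrix (Fin nu) (Fin nu) ℂ)) *ᵥ u
      = Dcᴴ *ᵥ (Dc *ᵥ u) - c • u := by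
    rw [Matrix.sub_mulVec, Matrix.smul_mulVec, Matrix.one_mulVec, ← Matrix.mulVec_mulVec]
  have k : E *ᵥ ((Dcᴴ * Dc - c • (1 : Matrix (Fin nu) (Fin nu) ℂ)) *ᵥ u) = u := by
    rw [Matrix.mulVec_mulVec, hE, Matrix.one_mulVec]
  have key : E *ᵥ (Dcᴴ *ᵥ (Cc *ᵥ x) + Bcᴴ *ᵥ y) = -u := by
    have inner : Dcᴴ *ᵥ (Cc *ᵥ x) + Bcᴴ *ᵥ y
        = -((Dcᴴ * Dc - c • (1 : Matrix (Fin nu) (Fin nu) ℂ)) *ᵥ u) := by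
      rw [h2, h4, e, Matrix.mulVec_sub]
      abel
    rw [inner, Matrix.mulVec_neg, k]
  calc (Ac + Bc * E * Dcᴴ * Cc) *ᵥ x + (Bc * E * Bcᴴ) *ᵥ y
      = Ac *ᵥ x + Bc *ᵥ (E *ᵥ (Dcᴴ *ᵥ (Cc *ᵥ x) + Bcᴴ *ᵥ y)) := by
        simp only [Matrix.add_mulVec, ← Matrix.mulVec_mulVec, Matrix.mulVec_add]
        abel
    _ = 0 := by
        rw [key, Matrix.mulVec_neg, h1]
        abel

lemma row2_abstract (hF : F * (Dc * Dcᴴ - c • 1) = 1) (hDF : Dc * E = F * Dc)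
    (h2 : Cc *ᵥ x = v - Dc *ᵥ u) (h3 : Acᴴ *ᵥ y = Ccᴴ *ᵥ v)
    (h4 : Bcᴴ *ᵥ y = c • u - Dcᴴ *ᵥ v) :
    (-(c • (Ccᴴ * F * Cc))) *ᵥ x + (-Acᴴ - Ccᴴ * Dc * E * Bcᴴ) *ᵥ y = 0 := by
  have hDFv : ∀ z : Fin nu → ℂ, Dc *ᵥ (E *ᵥ z) = F *ᵥ (Dc *ᵥ z) := by
    intro z
    rw [Matrix.mulVec_mulVec, Matrix.mulVec_mulVec, hDF]
  have e : (Dc * Dcᴴ - c • (1 : Matrix (Fin ny) (Fin ny) ℂ)) *ᵥ v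
      = Dc *ᵥ (Dcᴴ *ᵥ v) - c • v := by
    rw [Matrix.sub_mulVec, Matrix.smul_mulVec, Matrix.one_mulVec, ← Matrix.mulVec_mulVec]
  have key2 : F *ᵥ ((Dc * Dcᴴ - c • (1 : Matrix (Fin ny) (Fin ny) ℂ)) *ᵥ v) = v := by
    rw [Matrix.mulVec_mulVec, hF, Matrix.one_mulVec]
  have hX : -(c • (F *ᵥ (v - Dc *ᵥ u))) - v - F *ᵥ (Dc *ᵥ (c • u - Dcᴴ *ᵥ v))
      = (0 : Fin ny → ℂ) := by
    calc -(c • (F *ᵥ (v - Dc *ᵥ u))) - v - F *ᵥ (Dc *ᵥ (c • u - Dcᴴ *ᵥ v))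
        = F *ᵥ ((Dc * Dcᴴ - c • (1 : Matrix (Fin ny) (Fin ny) ℂ)) *ᵥ v) - v := by
          rw [e]
          simp only [Matrix.mulVec_sub, Matrix.mulVec_smul, smul_sub]
          abel
      _ = v - v := by rw [key2]
      _ = 0 := sub_self v
  calc (-(c • (Ccᴴ * F * Cc))) *ᵥ x + (-Acᴴ - Ccᴴ * Dc * E * Bcᴴ) *ᵥ y
      = Ccᴴ *ᵥ (-(c • (F *ᵥ (v - Dc *ᵥ u))) - v - F *ᵥ (Dc *ᵥ (c • u - Dcᴴ *ᵥ v))) := by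
        simp only [Matrix.neg_mulVec, Matrix.sub_mulVec, Matrix.smul_mulVec,
          ← Matrix.mulVec_mulVec, hDFv, h2, h3, h4, Matrix.mulVec_sub, Matrix.mulVec_smul,
          Matrix.mulVec_add, Matrix.mulVec_neg, smul_sub]
        abel
    _ = Ccᴴ *ᵥ 0 := by rw [hX]
    _ = 0 := Matrix.mulVec_zero _

end Rows

section Core

variable {n nu ny m : ℕ} (A0 : Matrix (Fin n) (Fin n) ℝ) (A : Fin m → Matrix (Fin n) (Fin n) ℝ)
  (B : Matrix (Fin n) (Fin nu) ℝ) (C : Matrix (Fin ny) (Fin n) ℝ)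
  (D : Matrix (Fin ny) (Fin nu) ℝ) (τ : Fin m → ℝ)

lemma amat_conjTranspose (ω : ℝ) :
    (Amat A0 A τ (Complex.I * ω))ᴴ
      = -((Complex.I * ω) • (1 : Matrix (Fin n) (Fin n) ℂ)) - (A0.map Complex.ofReal)ᴴ
        - ∑ i : Fin m, Complex.exp ((Complex.I * ω) * (τ i : ℂ)) • ((A i).map Complex.ofReal)ᴴ := by
  unfold Amat
  rw [Matrix.conjTranspose_sub, Matrix.conjTranspose_sub, Matrix.conjTranspose_smul,
    Matrix.conjTranspose_one, Matrix.conjTranspose_sum]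
  congr 1
  · congr 1
    rw [← neg_smul]
    congr 1
    simp [Complex.conj_ofReal]
  · refine Finset.sum_congr rfl fun i _ => ?_
    rw [Matrix.conjTranspose_smul]
    congr 1
    rw [Complex.star_def, ← Complex.exp_conj]
    congr 1
    simp [Complex.conj_ofReal]

lemma D_mul_Dxi_inv (ξ : ℝ) (hDxi : IsUnit (Dxi D ξ)) (hDxiT : IsUnit (DxiT D ξ)) :
    D * (Dxi D ξ)⁻¹ = (DxiT D ξ)⁻¹ * D := by
  have hcomm : DxiT D ξ * D = D * Dxi D ξ := by
    unfold Dxi DxiT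
    rw [Matrix.sub_mul, Matrix.mul_sub, Matrix.smul_mul, Matrix.mul_smul,
      Matrix.one_mul, Matrix.mul_one, Matrix.mul_assoc]
  have key : DxiT D ξ * (D * (Dxi D ξ)⁻¹) = D := by
    rw [← Matrix.mul_assoc, hcomm, Matrix.mul_assoc,
      Matrix.mul_nonsing_inv _ ((Matrix.isUnit_iff_isUnit_det _).1 hDxi), Matrix.mul_one]
  calc D * (Dxi D ξ)⁻¹
      = (DxiT D ξ)⁻¹ * (DxiT D ξ * (D * (Dxi D ξ)⁻¹)) := by
        rw [← Matrix.mul_assoc,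
          Matrix.nonsing_inv_mul _ ((Matrix.isUnit_iff_isUnit_det _).1 hDxiT), Matrix.one_mul]
    _ = (DxiT D ξ)⁻¹ * D := by rw [key]

end Core

section Det

variable {n nu ny m : ℕ} (A0 : Matrix (Fin n) (Fin n) ℝ) (A : Fin m → Matrix (Fin n) (Fin n) ℝ)
  (B : Matrix (Fin n) (Fin nu) ℝ) (C : Matrix (Fin ny) (Fin n) ℝ)
  (D : Matrix (Fin ny) (Fin nu) ℝ) (τ : Fin m → ℝ)

lemma det_Hxi_zero (ξ : ℝ) (hD : l2OpNorm (D.map Complex.ofReal) < ξ) (ω : ℝ)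
    (hAc : IsUnit (Amat A0 A τ (Complex.I * ω)))
    (u : Fin nu → ℂ) (hu : u ≠ 0)
    (heig : ((Gmat A0 A B C D τ (Complex.I * ω))ᴴ * Gmat A0 A B C D τ (Complex.I * ω)) *ᵥ u
      = ((ξ : ℂ) ^ 2) • u) :
    (Hxi A0 A B C D τ ξ (Complex.I * ω)).det = 0 := by
  obtain ⟨hDxiC, hDxiR⟩ := isUnit_Dxi hD
  obtain ⟨hDxiTC, hDxiTR⟩ := isUnit_DxiT hD
  have hdetAc : IsUnit (Amat A0 A τ (Complex.I * ω)).det :=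
    (Matrix.isUnit_iff_isUnit_det _).1 hAc
  have hdetAcH : IsUnit ((Amat A0 A τ (Complex.I * ω))ᴴ).det := by
    rw [Matrix.det_conjTranspose]
    exact hdetAc.star
  have hE : ((Dxi D ξ)⁻¹).map Complex.ofReal
      * ((D.map Complex.ofReal)ᴴ * (D.map Complex.ofReal) - (ξ : ℂ) ^ 2 • 1) = 1 := by
    rw [← map_Dxi, ← map_mul',
      Matrix.nonsing_inv_mul _ ((Matrix.isUnit_iff_isUnit_det _).1 hDxiR), map_one']
  have hF : ((DxiT D ξ)⁻¹).map Complex.ofReal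
      * ((D.map Complex.ofReal) * (D.map Complex.ofReal)ᴴ - (ξ : ℂ) ^ 2 • 1) = 1 := by
    have hmap := map_DxiT D ξ
    rw [Matrix.conjTranspose_conjTranspose] at hmap
    rw [← hmap, ← map_mul',
      Matrix.nonsing_inv_mul _ ((Matrix.isUnit_iff_isUnit_det _).1 hDxiTR), map_one']
  have hDF : (D.map Complex.ofReal) * ((Dxi D ξ)⁻¹).map Complex.ofReal
      = ((DxiT D ξ)⁻¹).map Complex.ofReal * (D.map Complex.ofReal) := by
    rw [← map_mul', ← map_mul', D_mul_Dxi_inv D ξ hDxiR hDxiTR]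
  set v : Fin ny → ℂ := Gmat A0 A B C D τ (Complex.I * ω) *ᵥ u with hv
  set x : Fin n → ℂ := (Amat A0 A τ (Complex.I * ω))⁻¹ *ᵥ (B.map Complex.ofReal *ᵥ u) with hx
  set y : Fin n → ℂ := ((Amat A0 A τ (Complex.I * ω))ᴴ)⁻¹ *ᵥ ((C.map Complex.ofReal)ᴴ *ᵥ v)
    with hy
  have h1 : Amat A0 A τ (Complex.I * ω) *ᵥ x = B.map Complex.ofReal *ᵥ u := by
    rw [hx, Matrix.mulVec_mulVec, Matrix.mul_nonsing_inv _ hdetAc, Matrix.one_mulVec]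
  have h3 : (Amat A0 A τ (Complex.I * ω))ᴴ *ᵥ y = (C.map Complex.ofReal)ᴴ *ᵥ v := by
    rw [hy, Matrix.mulVec_mulVec, Matrix.mul_nonsing_inv _ hdetAcH, Matrix.one_mulVec]
  have hGc : Gmat A0 A B C D τ (Complex.I * ω)
      = C.map Complex.ofReal * (Amat A0 A τ (Complex.I * ω))⁻¹ * B.map Complex.ofReal
        + D.map Complex.ofReal := rfl
  have h2 : C.map Complex.ofReal *ᵥ x = v - D.map Complex.ofReal *ᵥ u := by
    rw [hv, hGc, Matrix.add_mulVec, hx]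
    simp only [← Matrix.mulVec_mulVec]
    abel
  have h4 : (B.map Complex.ofReal)ᴴ *ᵥ y
      = ((ξ : ℂ) ^ 2) • u - (D.map Complex.ofReal)ᴴ *ᵥ v := by
    have hGH : (B.map Complex.ofReal)ᴴ * ((Amat A0 A τ (Complex.I * ω))ᴴ)⁻¹
          * (C.map Complex.ofReal)ᴴ
        = (Gmat A0 A B C D τ (Complex.I * ω))ᴴ - (D.map Complex.ofReal)ᴴ := by
      rw [hGc, Matrix.conjTranspose_add, Matrix.conjTranspose_mul, Matrix.conjTranspose_mul,
        Matrix.conjTranspose_nonsing_inv, add_sub_cancel_right, Matrix.mul_assoc]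
    have hyy : (B.map Complex.ofReal)ᴴ *ᵥ y
        = ((B.map Complex.ofReal)ᴴ * ((Amat A0 A τ (Complex.I * ω))ᴴ)⁻¹
            * (C.map Complex.ofReal)ᴴ) *ᵥ v := by
      rw [hy, Matrix.mulVec_mulVec, Matrix.mulVec_mulVec]
    rw [hyy, hGH, Matrix.sub_mulVec]
    congr 1
    rw [hv, Matrix.mulVec_mulVec, heig]
  rw [← Matrix.exists_mulVec_eq_zero_iff]
  refine ⟨Sum.elim x y, ?_, ?_⟩
  · intro h0
    have hx0 : x = 0 := funext fun i => congrFun h0 (Sum.inl i)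
    have hy0 : y = 0 := funext fun i => congrFun h0 (Sum.inr i)
    apply hu
    have hvDu : v = D.map Complex.ofReal *ᵥ u := by
      have h2' := h2
      rw [hx0, Matrix.mulVec_zero] at h2'
      exact eq_of_sub_eq_zero h2'.symm
    have h4' := h4
    rw [hy0, Matrix.mulVec_zero] at h4'
    have hDxiu : ((Dxi D ξ).map Complex.ofReal) *ᵥ u = 0 := by
      rw [map_Dxi, Matrix.sub_mulVec, Matrix.smul_mulVec, Matrix.one_mulVec,
        ← Matrix.mulVec_mulVec, ← hvDu, ← eq_of_sub_eq_zero h4'.symm, sub_self]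
    have hfold : u = ((Dxi D ξ)⁻¹).map Complex.ofReal *ᵥ (((Dxi D ξ).map Complex.ofReal) *ᵥ u) := by
      rw [Matrix.mulVec_mulVec, ← map_mul',
        Matrix.nonsing_inv_mul _ ((Matrix.isUnit_iff_isUnit_det _).1 hDxiR), map_one',
        Matrix.one_mulVec]
    rw [hfold, hDxiu, Matrix.mulVec_zero]
  · rw [Hxi_eq A0 A B C D τ ξ (Complex.I * ω)]
    have hS : (Complex.I * ω) • (1 : Matrix (Fin n) (Fin n) ℂ) + (A0.map Complex.ofReal)ᴴ
        - (C.map Complex.ofReal)ᴴ * (D.map Complex.ofReal) * ((Dxi D ξ)⁻¹).map Complex.ofReal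
          * (B.map Complex.ofReal)ᴴ
        + ∑ i : Fin m, Complex.exp ((Complex.I * ω) * (τ i : ℂ)) • ((A i).map Complex.ofReal)ᴴ
        = -(Amat A0 A τ (Complex.I * ω))ᴴ
          - (C.map Complex.ofReal)ᴴ * (D.map Complex.ofReal) * ((Dxi D ξ)⁻¹).map Complex.ofReal
            * (B.map Complex.ofReal)ᴴ := by
      rw [amat_conjTranspose]
      abel
    rw [hS, Matrix.fromBlocks_mulVec]
    have hcomp1 : Sum.elim x y ∘ Sum.inl = x := rfl
    have hcomp2 : Sum.elim x y ∘ Sum.inr = y := rfl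
    rw [hcomp1, hcomp2]
    rw [row1_abstract (Amat A0 A τ (Complex.I * ω)) (B.map Complex.ofReal) (C.map Complex.ofReal)
        (D.map Complex.ofReal) (((Dxi D ξ)⁻¹).map Complex.ofReal) ((ξ : ℂ) ^ 2) u v x y
        hE h1 h2 h4,
      row2_abstract (Amat A0 A τ (Complex.I * ω)) (B.map Complex.ofReal) (C.map Complex.ofReal)
        (D.map Complex.ofReal) (((Dxi D ξ)⁻¹).map Complex.ofReal)
        (((DxiT D ξ)⁻¹).map Complex.ofReal) ((ξ : ℂ) ^ 2) u v x y hF hDF h2 h3 h4]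
    funext i
    cases i <;> rfl

end Det

end Aux

/-- for every level `ξ` with `‖D‖ < ξ ≤ ‖G(iω̂)‖`, the matrix `D_ξ` is
invertible and `H_ξ` has a root on the imaginary axis. -/
theorem exists_imaginary_root_of_le [NeZero n] [NeZero nu] [NeZero ny] [NeZero m]
    (A0 : Matrix (Fin n) (Fin n) ℝ) (A : Fin m → Matrix (Fin n) (Fin n) ℝ)
    (B : Matrix (Fin n) (Fin nu) ℝ) (C : Matrix (Fin ny) (Fin n) ℝ)
    (D : Matrix (Fin ny) (Fin nu) ℝ) (τ : Fin m → ℝ) (hτ : ∀ i, 0 ≤ τ i)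
    (hA : ∀ ω : ℝ, IsUnit (Amat A0 A τ (Complex.I * ω)))
    (ωhat : ℝ) (ξhat : ℝ) (hξhat : ξhat = l2OpNorm (Gmat A0 A B C D τ (Complex.I * ωhat))) :
    ∀ ξ : ℝ, l2OpNorm (D.map Complex.ofReal) < ξ → ξ ≤ ξhat →
      IsUnit (Dxi D ξ) ∧ ∃ ω : ℝ, (Hxi A0 A B C D τ ξ (Complex.I * ω)).det = 0 := by
  intro ξ hξD hξξhat
  obtain ⟨hDxiC, hDxiR⟩ := Aux.isUnit_Dxi hξD
  refine ⟨hDxiR, ?_⟩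
  obtain ⟨ω₀, hω₀⟩ := Aux.exists_gfun_lt A0 A B C D τ hA hξD
  have hcont := Aux.continuous_gfun A0 A B C D τ hA
  have hmem : ξ ∈ Set.uIcc (l2OpNorm (Gmat A0 A B C D τ (Complex.I * ω₀)))
      (l2OpNorm (Gmat A0 A B C D τ (Complex.I * ωhat))) := by
    rw [Set.mem_uIcc]
    exact Or.inl ⟨hω₀.le, hξhat ▸ hξξhat⟩
  obtain ⟨ωs, _, hωs⟩ := intermediate_value_uIcc
    (hcont.continuousOn
      (s := Set.uIcc ω₀ ωhat)) hmem
  obtain ⟨u, hu, heig⟩ := Aux.exists_eigenvector (Gmat A0 A B C D τ (Complex.I * ωs))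
  rw [show l2OpNorm (Gmat A0 A B C D τ (Complex.I * ωs)) = ξ from hωs] at heig
  exact ⟨ωs, Aux.det_Hxi_zero A0 A B C D τ ξ hξD ωs (hA ωs) u hu heig⟩
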